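/- Let A, B, C, A_Δ, B_Δ, C_Δ, A_k, B_k, C_k, D_k be real matrices of compatible dimensions. On an open interval between two consecutive triggering instants, suppose ŷ and û are constant, and x_p, x_k, ξ are differentiable functions satisfying ẋ_p = A x_p + B û, y = C x_p + d, ξ̇ = A_Δ ξ + B_Δ û, d = C_Δ ξ, ẋ_k = A_k x_k + B_k ŷ, u = C_k x_k + D_k ŷ, with ŷ = y + ε_y and û = u + ε_u. Then on this interval the sampling error ε = (ε_y, ε_u) satisfies ε̇ = Â ε + B̂ ζ with ζ = (x_p, x_k, ξ), where Â = [[−C B D_k − C_Δ B_Δ D_k, −C B − C_Δ B_Δ],[−C_k B_k, 0]] and B̂ = [[−C A − C B D_k C − C_Δ B_Δ D_k C, −C B C_k − C_Δ B_Δ C_k, −C B D_k C_Δ − C_Δ B_Δ D_k C_Δ − C_Δ A_Δ],[−C_k B_k C, −C_k A_k, −C_k B_k C_Δ]]. -/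

import Mathlib

open Matrix

private lemma mulVec_hasDerivAt {m k : Type*} [Fintype k] (M : Matrix m k ℝ)
    {x : ℝ → k → ℝ} {x' : k → ℝ} {t : ℝ} (hx : HasDerivAt x x' t) (j : m) :
    HasDerivAt (fun s => (M *ᵥ x s) j) ((M *ᵥ x') j) t := by
  simp only [Matrix.mulVec, dotProduct]
  exact HasDerivAt.fun_sum fun k _ => ((hasDerivAt_pi.mp hx k).const_mul (M j k))
/-- Inter-sample dynamics of the sampling error: between two consecutive triggering
instants (on the open interval `(a, b)` where `ŷ` and `û` are held constant), the
sampling error `ε = (ε_y, ε_u)` satisfies `ε̇ = Â ε + B̂ ζ` with `ζ = (x_p, x_k, ξ)`.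
(Here `yhat = ŷ`, `uhat = û`.) -/
theorem intersample_error_dynamics (n nk nd p q : ℕ)
    (A : Matrix (Fin n) (Fin n) ℝ) (B : Matrix (Fin n) (Fin q) ℝ)
    (C : Matrix (Fin p) (Fin n) ℝ)
    (AΔ : Matrix (Fin nd) (Fin nd) ℝ) (BΔ : Matrix (Fin nd) (Fin q) ℝ)
    (CΔ : Matrix (Fin p) (Fin nd) ℝ)
    (Ak : Matrix (Fin nk) (Fin nk) ℝ) (Bk : Matrix (Fin nk) (Fin p) ℝ)
    (Ck : Matrix (Fin q) (Fin nk) ℝ) (Dk : Matrix (Fin q) (Fin p) ℝ)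
    (a b : ℝ)
    (xp : ℝ → Fin n → ℝ) (xk : ℝ → Fin nk → ℝ) (ξ : ℝ → Fin nd → ℝ)
    (y d yhat εy : ℝ → Fin p → ℝ) (u uhat εu : ℝ → Fin q → ℝ)
    (cy : Fin p → ℝ) (cu : Fin q → ℝ)
    (hyc : ∀ t ∈ Set.Ioo a b, yhat t = cy)
    (huc : ∀ t ∈ Set.Ioo a b, uhat t = cu)
    (hxp : ∀ t ∈ Set.Ioo a b, HasDerivAt xp (A *ᵥ xp t + B *ᵥ uhat t) t)
    (hy : ∀ t ∈ Set.Ioo a b, y t = C *ᵥ xp t + d t)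
    (hξ : ∀ t ∈ Set.Ioo a b, HasDerivAt ξ (AΔ *ᵥ ξ t + BΔ *ᵥ uhat t) t)
    (hd : ∀ t ∈ Set.Ioo a b, d t = CΔ *ᵥ ξ t)
    (hxk : ∀ t ∈ Set.Ioo a b, HasDerivAt xk (Ak *ᵥ xk t + Bk *ᵥ yhat t) t)
    (hu : ∀ t ∈ Set.Ioo a b, u t = Ck *ᵥ xk t + Dk *ᵥ yhat t)
    (hεy : ∀ t ∈ Set.Ioo a b, εy t = yhat t - y t)
    (hεu : ∀ t ∈ Set.Ioo a b, εu t = uhat t - u t)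
    (Ahat : Matrix (Fin p ⊕ Fin q) (Fin p ⊕ Fin q) ℝ)
    (Bhat : Matrix (Fin p ⊕ Fin q) ((Fin n ⊕ Fin nk) ⊕ Fin nd) ℝ)
    (hAhat : Ahat = fromBlocks (-(C * B * Dk) - CΔ * BΔ * Dk) (-(C * B) - CΔ * BΔ)
      (-(Ck * Bk)) 0)
    (hBhat : Bhat = fromBlocks
      (fromCols (-(C * A) - C * B * Dk * C - CΔ * BΔ * Dk * C)
        (-(C * B * Ck) - CΔ * BΔ * Ck))
      (-(C * B * Dk * CΔ) - CΔ * BΔ * Dk * CΔ - CΔ * AΔ)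
      (fromCols (-(Ck * Bk * C)) (-(Ck * Ak)))
      (-(Ck * Bk * CΔ))) :
    ∀ t ∈ Set.Ioo a b,
      HasDerivAt (fun s => Sum.elim (εy s) (εu s))
        (Ahat *ᵥ Sum.elim (εy t) (εu t) +
          Bhat *ᵥ Sum.elim (Sum.elim (xp t) (xk t)) (ξ t)) t := by
  intro t ht
  have hmem := isOpen_Ioo.mem_nhds ht
  set g : ℝ → (Fin p ⊕ Fin q → ℝ) := fun s =>
    Sum.elim (cy - C *ᵥ xp s - CΔ *ᵥ ξ s) (cu - Ck *ᵥ xk s - Dk *ᵥ cy) with hg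
  have heq : ∀ s ∈ Set.Ioo a b, Sum.elim (εy s) (εu s) = g s := by
    intro s hs
    have h1 : εy s = cy - C *ᵥ xp s - CΔ *ᵥ ξ s := by
      rw [hεy s hs, hy s hs, hd s hs, hyc s hs]; abel
    have h2 : εu s = cu - Ck *ᵥ xk s - Dk *ᵥ cy := by
      rw [hεu s hs, hu s hs, huc s hs, hyc s hs]; abel
    rw [hg, h1, h2]
  have hfeq : (fun s => Sum.elim (εy s) (εu s)) =ᶠ[nhds t] g :=
    Filter.eventuallyEq_of_mem hmem heq
  have hxp' := hxp t ht
  have hξ' := hξ t ht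
  have hxk' := hxk t ht
  rw [huc t ht] at hxp' hξ'
  rw [hyc t ht] at hxk'
  have hgd : HasDerivAt g
      (Sum.elim (-(C *ᵥ (A *ᵥ xp t + B *ᵥ cu)) - CΔ *ᵥ (AΔ *ᵥ ξ t + BΔ *ᵥ cu))
        (-(Ck *ᵥ (Ak *ᵥ xk t + Bk *ᵥ cy)))) t := by
    rw [hg]
    apply hasDerivAt_pi.mpr
    rintro (j | j)
    · have h := ((hasDerivAt_const t (cy j)).fun_sub (mulVec_hasDerivAt C hxp' j)).fun_sub
        (mulVec_hasDerivAt CΔ hξ' j)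
      simp only [Sum.elim_inl, Pi.sub_apply, Pi.neg_apply]
      simpa using h
    · have h := ((hasDerivAt_const t (cu j)).fun_sub (mulVec_hasDerivAt Ck hxk' j)).fun_sub
        (hasDerivAt_const t ((Dk *ᵥ cy) j))
      simp only [Sum.elim_inr, Pi.sub_apply, Pi.neg_apply]
      have : (fun x => cu j - (Ck *ᵥ xk x) j - (Dk *ᵥ cy) j) = fun x => cu j - (Dk *ᵥ cy) j - (Ck *ᵥ xk x) j := by
        funext x; ring
      simpa [this] using h
  have := hgd.congr_of_eventuallyEq hfeq
  refine this.congr_deriv ?_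
  have h1 : εy t = cy - C *ᵥ xp t - CΔ *ᵥ ξ t := by
    rw [hεy t ht, hy t ht, hd t ht, hyc t ht]; abel
  have h2 : εu t = cu - Ck *ᵥ xk t - Dk *ᵥ cy := by
    rw [hεu t ht, hu t ht, huc t ht, hyc t ht]; abel
  funext i
  cases i <;>
    simp only [hAhat, hBhat, h1, h2, fromBlocks_mulVec, fromCols_mulVec_sumElim,
      Matrix.mulVec_add, Matrix.mulVec_sub, Matrix.sub_mulVec, Matrix.add_mulVec,
      Matrix.neg_mulVec, Matrix.zero_mulVec, ← Matrix.mulVec_mulVec,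
      Sum.elim_comp_inl, Sum.elim_comp_inr,
      Sum.elim_inl, Sum.elim_inr, Pi.add_apply, Pi.sub_apply, Pi.neg_apply,
      Pi.zero_apply] <;> ring
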